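/- If T ⊥_{ωB} (ω(T)·S − ω(S)·T), then ω(T + S) = ω(T) + ω(S). -/

import Mathlib

open Filter Topology ComplexOrder

variable {H : Type*} [NormedAddCommGroup H] [InnerProductSpace ℂ H] [CompleteSpace H]

/-- The numerical radius of a bounded operator `T`:
`ω(T) = sup {|⟨Tx, x⟩| : ‖x‖ = 1}`. -/
noncomputable def numRad (T : H →L[ℂ] H) : ℝ :=
  sSup {r : ℝ | ∃ x : H, ‖x‖ = 1 ∧ r = ‖(inner ℂ x (T x) : ℂ)‖}

/-- Numerical radius Birkhoff orthogonality: `ω(T + λS) ≥ ω(T)` for all `λ ∈ ℂ`. -/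
def wBOrth (T S : H →L[ℂ] H) : Prop :=
  ∀ lam : ℂ, numRad T ≤ numRad (T + lam • S)

lemma numRad_set_bddAbove (T : H →L[ℂ] H) :
    BddAbove {r : ℝ | ∃ x : H, ‖x‖ = 1 ∧ r = ‖(inner ℂ x (T x) : ℂ)‖} := by
  refine ⟨‖T‖, ?_⟩
  rintro r ⟨x, hx, rfl⟩
  calc ‖(inner ℂ x (T x) : ℂ)‖ ≤ ‖x‖ * ‖T x‖ := norm_inner_le_norm x (T x)
    _ ≤ ‖x‖ * (‖T‖ * ‖x‖) := by
        exact mul_le_mul_of_nonneg_left (T.le_opNorm x) (norm_nonneg x)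
    _ = ‖T‖ := by rw [hx]; ring

lemma numRad_nonneg (T : H →L[ℂ] H) : 0 ≤ numRad T :=
  Real.sSup_nonneg (by rintro r ⟨x, hx, rfl⟩; exact norm_nonneg _)

lemma le_numRad (T : H →L[ℂ] H) {x : H} (hx : ‖x‖ = 1) :
    ‖(inner ℂ x (T x) : ℂ)‖ ≤ numRad T :=
  le_csSup (numRad_set_bddAbove T) ⟨x, hx, rfl⟩

lemma numRad_add_le (T S : H →L[ℂ] H) :
    numRad (T + S) ≤ numRad T + numRad S := by
  apply Real.sSup_le
  · rintro r ⟨x, hx, rfl⟩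
    have : (inner ℂ x ((T + S) x) : ℂ) = inner ℂ x (T x) + inner ℂ x (S x) := by
      simp [inner_add_right]
    rw [this]
    exact le_trans (norm_add_le _ _) (add_le_add (le_numRad T hx) (le_numRad S hx))
  · exact add_nonneg (numRad_nonneg T) (numRad_nonneg S)

lemma numRad_smul_le (c : ℂ) (T : H →L[ℂ] H) :
    numRad (c • T) ≤ ‖c‖ * numRad T := by
  apply Real.sSup_le
  · rintro r ⟨x, hx, rfl⟩
    have : (inner ℂ x ((c • T) x) : ℂ) = c * inner ℂ x (T x) := by
      simp [inner_smul_right]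
    rw [this, norm_mul]
    exact mul_le_mul_of_nonneg_left (le_numRad T hx) (norm_nonneg c)
  · exact mul_nonneg (norm_nonneg c) (numRad_nonneg T)

lemma numRad_eq_zero {T : H →L[ℂ] H} (h : numRad T = 0) : T = 0 := by
  have key : ∀ x : H, (inner ℂ (T x) x : ℂ) = 0 := by
    intro x
    rcases eq_or_ne x 0 with rfl | hx
    · simp
    · have hxu : ‖(‖x‖⁻¹ : ℂ) • x‖ = 1 := by
        rw [norm_smul]
        simp [norm_inv, inv_mul_cancel₀ (norm_ne_zero_iff.mpr hx)]
      have h1 := le_numRad T hxu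
      rw [h] at h1
      have h2 : (inner ℂ ((‖x‖⁻¹ : ℂ) • x) (T ((‖x‖⁻¹ : ℂ) • x)) : ℂ) = 0 :=
        norm_le_zero_iff.mp h1
      rw [map_smul, inner_smul_left, inner_smul_right] at h2
      have hne : (‖x‖⁻¹ : ℂ) ≠ 0 := by
        simp [norm_ne_zero_iff.mpr hx]
      have h3 : (inner ℂ x (T x) : ℂ) = 0 := by
        field_simp at h2
        have h2' : (inner ℂ x (T x) : ℂ) = 0 ∨ x = 0 := by simpa [or_comm] using h2
        exact h2'.resolve_right hx
      rw [← inner_conj_symm, h3, map_zero]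
  have := (inner_map_self_eq_zero (T : H →ₗ[ℂ] H)).mp (by intro x; exact key x)
  ext x
  exact congrFun (congrArg DFunLike.coe this) x

theorem stmt_13 (T S : H →L[ℂ] H)
    (h : wBOrth T ((numRad T : ℂ) • S - (numRad S : ℂ) • T)) :
    numRad (T + S) = numRad T + numRad S := by
  set a := numRad T with ha
  set b := numRad S with hb
  have ha0 : 0 ≤ a := numRad_nonneg T
  have hb0 : 0 ≤ b := numRad_nonneg S
  refine le_antisymm (numRad_add_le T S) ?_
  rcases eq_or_lt_of_le ha0 with haz | hap
  · -- a = 0, so T = 0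
    have hT : T = 0 := numRad_eq_zero haz.symm
    rw [hT, zero_add, ← haz, zero_add]
  · -- a > 0
    have hab : 0 < a + b := by linarith
    have habn : (a + b : ℝ) ≠ 0 := ne_of_gt hab
    set lam : ℂ := (((a + b)⁻¹ : ℝ) : ℂ)
    have hkey := h lam
    have heq : T + lam • ((a : ℂ) • S - (b : ℂ) • T)
        = ((a / (a + b) : ℝ) : ℂ) • (T + S) := by
      rw [smul_sub, smul_smul, smul_smul, smul_add]
      have e1 : lam * (a : ℂ) = ((a / (a + b) : ℝ) : ℂ) := by
        simp only [lam]
        push_cast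
        field_simp
      have e2 : T - (lam * (b : ℂ)) • T = ((a / (a + b) : ℝ) : ℂ) • T := by
        rw [sub_eq_iff_eq_add, ← add_smul]
        nth_rewrite 1 [show T = (1 : ℂ) • T from (one_smul ℂ T).symm]
        congr 1
        simp only [lam]
        push_cast
        field_simp
      rw [e1, ← e2]
      abel
    rw [heq] at hkey
    have h2 : a ≤ ‖((a / (a + b) : ℝ) : ℂ)‖ * numRad (T + S) :=
      le_trans hkey (numRad_smul_le _ _)
    have hnorm : ‖((a / (a + b) : ℝ) : ℂ)‖ = a / (a + b) := by
      rw [Complex.norm_real, Real.norm_eq_abs, abs_of_nonneg (div_nonneg ha0 (le_of_lt hab))]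
    rw [hnorm, div_mul_eq_mul_div, le_div_iff₀ hab] at h2
    exact le_of_mul_le_mul_left h2 hap
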